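/- For every real L ≥ 0 and every real number γ there exist θ ∈ (π/2, π), κ > 0, τ* > 0 and a constant C > 0 such that for every τ ∈ (0, τ*], every complex number w with |w| ≤ L, and every z on the contour Γ^τ_{θ,κ}, one has |(z+w)^γ − (δ_{τ,2}(e^{−τ(z+w)}))^γ| ≤ C τ² |z|^{γ+2}, where complex powers are taken with the principal branch. -/

import Mathlib

open Real Complex

noncomputable def Complex.abs : AbsoluteValue ℂ ℝ := NormedField.toAbsoluteValue ℂ

lemma Complex.norm_eq_abs (z : ℂ) : ‖z‖ = Complex.abs z := rfl

lemma Complex.abs_ofReal (r : ℝ) : Complex.abs (r : ℂ) = |r| := by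
  rw [← Complex.norm_eq_abs, Complex.norm_real, Real.norm_eq_abs]

lemma Complex.abs_I : Complex.abs Complex.I = 1 := by
  rw [← Complex.norm_eq_abs, Complex.norm_I]

lemma Complex.abs_cpow_real (x : ℂ) (y : ℝ) : Complex.abs (x ^ (y : ℂ)) = Complex.abs x ^ y :=
  Complex.norm_cpow_real x y

lemma Complex.continuous_abs : Continuous Complex.abs := continuous_norm

lemma Complex.abs_mul_cos_arg (x : ℂ) : Complex.abs x * Real.cos (Complex.arg x) = x.re :=
  Complex.norm_mul_cos_arg x

lemma Complex.abs_exp (z : ℂ) : Complex.abs (Complex.exp z) = Real.exp z.re :=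
  Complex.norm_exp z

lemma Complex.abs_two : Complex.abs 2 = 2 := by
  rw [← Complex.norm_eq_abs]; norm_num

lemma aux_rpow_add_two {a : ℝ} (ha : 0 < a) (γ : ℝ) : a ^ (γ+2) = a ^ γ * a^2 := by
  rw [Real.rpow_add ha]
  congr 1
  rw [show (2:ℝ) = ((2:ℕ):ℝ) by norm_num, Real.rpow_natCast]


-- placeholders for tested lemmas

lemma aux_real_log_abs {t : ℝ} (h1 : 1/2 ≤ t) : |Real.log t| ≤ 2 * |t - 1| := by
  have ht : 0 < t := by linarith
  rcases le_or_gt 1 t with h | h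
  · have h2 : Real.log t ≤ t - 1 := Real.log_le_sub_one_of_pos ht
    have h3 : 0 ≤ Real.log t := Real.log_nonneg h
    rw [_root_.abs_of_nonneg h3, _root_.abs_of_nonneg (by linarith)]
    linarith
  · have hinv : Real.log t⁻¹ ≤ t⁻¹ - 1 := Real.log_le_sub_one_of_pos (by positivity)
    rw [Real.log_inv] at hinv
    have h3 : Real.log t ≤ 0 := Real.log_nonpos (by linarith) (by linarith)
    rw [_root_.abs_of_nonpos h3, _root_.abs_of_nonpos (by linarith)]
    have h4 : t⁻¹ - 1 = (1 - t)/t := by field_simp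
    rw [h4] at hinv
    have h5 : (1 - t)/t ≤ 2*(1-t) := by
      rw [div_le_iff₀ ht]; nlinarith
    linarith

lemma aux_arg_one_add {s : ℂ} (hs : Complex.abs s ≤ 1/2) :
    |Complex.arg (1 + s)| ≤ 2 * Complex.abs s := by
  have hre : (1/2 : ℝ) ≤ (1 + s).re := by
    have h1 : |s.re| ≤ Complex.abs s := Complex.abs_re_le_norm s
    have : (1 + s).re = 1 + s.re := by simp
    rw [this]
    cases abs_le.mp h1 with
    | intro h2 h3 => linarith
  have hrepos : 0 < (1 + s).re := by linarith
  have harg2 : |Complex.arg (1 + s)| < π/2 :=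
    Complex.abs_arg_lt_pi_div_two_iff.mpr (Or.inl hrepos)
  have htan : Real.tan (Complex.arg (1 + s)) = (1 + s).im / (1 + s).re :=
    Complex.tan_arg _
  have hle : |Complex.arg (1 + s)| ≤ Real.tan |Complex.arg (1 + s)| :=
    Real.le_tan (abs_nonneg _) harg2
  have htanabs : Real.tan |Complex.arg (1 + s)| = |Real.tan (Complex.arg (1 + s))| := by
    rcases abs_choice (Complex.arg (1 + s)) with h | h <;> rw [h]
    · refine (_root_.abs_of_nonneg ?_).symm
      have h0 : (0:ℝ) ≤ |Complex.arg (1+s)| := abs_nonneg _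
      have := hle; rw [h] at this; linarith
    · rw [Real.tan_neg]
      refine (_root_.abs_of_nonpos ?_).symm
      have h0 : (0:ℝ) ≤ |Complex.arg (1+s)| := abs_nonneg _
      have := hle; rw [h, Real.tan_neg] at this; linarith
  have him : |(1 + s).im| ≤ Complex.abs s := by
    have : (1 + s).im = s.im := by simp
    rw [this]; exact (Complex.abs_im_le_norm s).trans le_rfl
  calc |Complex.arg (1 + s)| ≤ |Real.tan (Complex.arg (1 + s))| := by rw [← htanabs]; exact hle
    _ = |(1 + s).im| / |(1 + s).re| := by rw [htan, abs_div]
    _ ≤ Complex.abs s / (1/2) := by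
        apply div_le_div₀ (by positivity) him (by norm_num)
        rw [abs_of_pos hrepos]; exact hre
    _ = 2 * Complex.abs s := by ring

lemma aux_abs_one_add_ge {s : ℂ} : 1 - Complex.abs s ≤ Complex.abs (1 + s) := by
  have h2 := Complex.abs.add_le (1 + s) (-s)
  rw [show (1:ℂ) + s + -s = 1 by ring] at h2
  have h3 : Complex.abs (-s) = Complex.abs s := AbsoluteValue.map_neg _ s
  rw [h3, map_one] at h2
  linarith

lemma aux_abs_one_add_le {s : ℂ} : Complex.abs (1 + s) ≤ 1 + Complex.abs s := by
  have := Complex.abs.add_le 1 s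
  simpa using this

lemma aux_log_one_add {s : ℂ} (hs : Complex.abs s ≤ 1/2) :
    Complex.abs (Complex.log (1 + s)) ≤ 4 * Complex.abs s := by
  have hge := aux_abs_one_add_ge (s := s)
  have hle' := aux_abs_one_add_le (s := s)
  have hre : |(Complex.log (1 + s)).re| ≤ 2 * Complex.abs s := by
    rw [Complex.log_re, Complex.norm_eq_abs]
    have h1 : (1:ℝ)/2 ≤ Complex.abs (1 + s) := by linarith
    have h2 := aux_real_log_abs h1
    have h3 : |Complex.abs (1 + s) - 1| ≤ Complex.abs s := by
      rw [abs_le]; constructor <;> linarith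
    linarith
  have him : |(Complex.log (1 + s)).im| ≤ 2 * Complex.abs s := by
    rw [Complex.log_im]
    exact aux_arg_one_add hs
  calc Complex.abs (Complex.log (1 + s)) ≤ |(Complex.log (1+s)).re| + |(Complex.log (1+s)).im| :=
        Complex.norm_le_abs_re_add_abs_im _
    _ ≤ 4 * Complex.abs s := by linarith

lemma aux_rpow_ratio {p q R γ : ℝ} (hp : 0 < p) (hq : 0 < q) (hR : 1 ≤ R)
    (h1 : p ≤ R * q) (h2 : q ≤ R * p) : p ^ γ ≤ R ^ |γ| * q ^ γ := by
  have hR0 : 0 < R := by linarith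
  have hpq : p ^ γ = (p/q) ^ γ * q ^ γ := by
    rw [← Real.mul_rpow (by positivity) hq.le, div_mul_cancel₀]
    exact hq.ne'
  rw [hpq]
  have hqg : 0 < q ^ γ := Real.rpow_pos_of_pos hq γ
  have key : (p/q) ^ γ ≤ R ^ |γ| := by
    rcases le_or_gt 0 γ with hγ | hγ
    · rw [_root_.abs_of_nonneg hγ]
      apply Real.rpow_le_rpow (by positivity) _ hγ
      rw [div_le_iff₀ hq]; linarith [mul_comm R q]
    · rw [_root_.abs_of_neg hγ]
      have hinv : R⁻¹ ≤ p/q := by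
        rw [le_div_iff₀ hq, inv_mul_le_iff₀ hR0]; linarith [mul_comm R p]
      have := Real.rpow_le_rpow_of_nonpos (by positivity) hinv hγ.le
      calc (p/q) ^ γ ≤ (R⁻¹) ^ γ := this
        _ = R ^ (-γ) := by rw [Real.inv_rpow hR0.le, ← Real.rpow_neg hR0.le]
  calc (p/q) ^ γ * q ^ γ ≤ R ^ |γ| * q ^ γ := by
        apply mul_le_mul_of_nonneg_right key hqg.le
    _ = R ^ |γ| * q ^ γ := rfl

lemma aux_cubic {x : ℂ} (hx : Complex.abs x ≤ 1) :
    Complex.abs ((1 - Complex.exp (-x)) + (1 - Complex.exp (-x))^2/2 - x)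
      ≤ 2 * Complex.abs x ^ 3 := by
  have hb := Complex.exp_bound (x := -x) (by rw [norm_neg]; exact hx) (n := 3) (by norm_num)
  have hsum : ∑ m ∈ Finset.range 3, (-x) ^ m / m.factorial = 1 - x + x^2/2 := by
    simp [Finset.sum_range_succ, Nat.factorial]
    ring
  rw [hsum] at hb
  have hp : Complex.abs (Complex.exp (-x) - (1 - x + x^2/2)) ≤ (2/9) * Complex.abs x ^ 3 := by
    have h1 : Complex.abs (-x) = Complex.abs x := AbsoluteValue.map_neg _ x
    simp only [Complex.norm_eq_abs] at hb; rw [h1] at hb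
    calc Complex.abs (Complex.exp (-x) - (1 - x + x^2/2)) ≤
        Complex.abs x ^ 3 * ((3:ℕ).succ * ((3:ℕ).factorial * (3:ℕ) : ℝ)⁻¹) := hb
      _ = (2/9) * Complex.abs x ^ 3 := by norm_num [Nat.factorial]; ring
  set p : ℂ := Complex.exp (-x) - (1 - x + x^2/2) with hpdef
  set q : ℂ := x^2/2 + p with hqdef
  have hiden : (1 - Complex.exp (-x)) + (1 - Complex.exp (-x))^2/2 - x
      = -p - x*q + q^2/2 := by
    rw [hqdef, hpdef]; ring
  rw [hiden]
  have habsq : Complex.abs q ≤ Complex.abs x ^ 2 := by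
    calc Complex.abs q ≤ Complex.abs (x^2/2) + Complex.abs p := Complex.abs.add_le _ _
      _ ≤ Complex.abs x ^2/2 + (2/9) * Complex.abs x ^3 := by
          rw [map_div₀, map_pow]; simp [Complex.abs_two]; linarith [hp]
      _ ≤ Complex.abs x ^ 2 := by nlinarith [Complex.abs.nonneg x, pow_le_one₀ (Complex.abs.nonneg x) hx (n := 1)]
  have h3 : Complex.abs x ^ 3 ≤ Complex.abs x ^ 3 := le_refl _
  have hax := Complex.abs.nonneg x
  calc Complex.abs (-p - x*q + q^2/2)
      ≤ Complex.abs (-p - x*q) + Complex.abs (q^2/2) := Complex.abs.add_le _ _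
    _ ≤ (Complex.abs (-p) + Complex.abs (x*q)) + Complex.abs (q^2/2) := by
        linarith [Complex.abs.sub_le_add (-p) (x*q)]
    _ ≤ ((2/9) * Complex.abs x^3 + Complex.abs x * Complex.abs x^2) + (Complex.abs x^2)^2/2 := by
        have e1 : Complex.abs (-p) = Complex.abs p := AbsoluteValue.map_neg _ p
        have e2 : Complex.abs (x*q) = Complex.abs x * Complex.abs q := map_mul _ _ _
        have e3 : Complex.abs (q^2/2) = Complex.abs q^2/2 := by rw [map_div₀, map_pow]; simp [Complex.abs_two]
        rw [e1, e2, e3]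
        have : Complex.abs x * Complex.abs q ≤ Complex.abs x * Complex.abs x^2 :=
          mul_le_mul_of_nonneg_left habsq hax
        have h4 : Complex.abs q^2 ≤ (Complex.abs x^2)^2 := by
          apply pow_le_pow_left₀ (Complex.abs.nonneg q) habsq
        linarith [hp]
    _ ≤ 2 * Complex.abs x ^ 3 := by nlinarith [pow_le_one₀ hax hx (n:=1)]

lemma aux_f_ne_zero {θ'' M : ℝ} (hθ1 : π/2 < θ'') (hθ2 : θ'' < π) (hM : M < 2*π) {x : ℂ}
    (h0 : x ≠ 0) (hxM : Complex.abs x ≤ M)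
    (hA : Complex.abs x * Real.cos θ'' ≤ x.re) :
    (1 - Complex.exp (-x)) + (1 - Complex.exp (-x))^2/2 ≠ 0 := by
  intro h
  set u : ℂ := 1 - Complex.exp (-x) with hu
  have hfact : u * (2 + u) = 0 := by
    have h2 : u * (2 + u) = 2 * (u + u^2/2) := by ring
    rw [h2, h, mul_zero]
  have hcos : -1 < Real.cos θ'' := by
    have hs : 0 < Real.sin θ'' := Real.sin_pos_of_pos_of_lt_pi (by linarith [Real.pi_pos]) hθ2
    nlinarith [Real.sin_sq_add_cos_sq θ'', Real.neg_one_le_cos θ'']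
  rcases mul_eq_zero.mp hfact with hc | hc
  · -- u = 0 : exp(-x) = 1
    have he : Complex.exp (-x) = 1 := by
      have h3 : (1:ℂ) - Complex.exp (-x) = 0 := hc
      linear_combination -h3
    obtain ⟨n, hn⟩ := Complex.exp_eq_one_iff.mp he
    have hc' : (n:ℂ) * (2 * (π:ℝ) * Complex.I) = ((2*π*(n:ℝ) : ℝ):ℂ) * Complex.I := by
      push_cast; ring
    have hxn : x = -(((2*π*(n:ℝ) : ℝ):ℂ) * Complex.I) := by
      rw [← hc']; linear_combination -hn
    have habs : Complex.abs x = |2*π*(n:ℝ)| := by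
      rw [hxn, AbsoluteValue.map_neg, map_mul, Complex.abs_ofReal, Complex.abs_I, mul_one]
    rcases eq_or_ne n 0 with h0' | h0'
    · apply h0; rw [hxn, h0']; simp
    · have h1 : (1:ℝ) ≤ |(n:ℝ)| := by
        rw [← Int.cast_abs]
        exact_mod_cast Int.one_le_abs h0'
      have h2 : 2*π ≤ Complex.abs x := by
        rw [habs, abs_mul, _root_.abs_of_nonneg (by positivity : (0:ℝ) ≤ 2*π)]
        nlinarith [Real.pi_pos]
      linarith
  · -- u = -2 : exp(-x) = 3
    have he : Complex.exp (-x) = 3 := by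
      have h3 : (2:ℂ) + (1 - Complex.exp (-x)) = 0 := hc
      linear_combination -h3
    have he2 : Complex.exp (-x - (Real.log 3 : ℂ)) = 1 := by
      rw [Complex.exp_sub, he, ← Complex.ofReal_exp, Real.exp_log (by norm_num)]
      norm_num
    obtain ⟨n, hn⟩ := Complex.exp_eq_one_iff.mp he2
    have hc' : (n:ℂ) * (2 * (π:ℝ) * Complex.I) = ((2*π*(n:ℝ) : ℝ):ℂ) * Complex.I := by
      push_cast; ring
    have hxn : x = -((Real.log 3 : ℝ):ℂ) - ((2*π*(n:ℝ) : ℝ):ℂ) * Complex.I := by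
      rw [← hc']; linear_combination -hn
    rcases eq_or_ne n 0 with h0' | h0'
    · simp only [h0', Int.cast_zero, mul_zero, zero_mul, Complex.ofReal_zero, sub_zero] at hxn
      have hre : x.re = -Real.log 3 := by
        rw [hxn]; simp only [Complex.neg_re, Complex.ofReal_re]
      have habs : Complex.abs x = Real.log 3 := by
        rw [hxn, AbsoluteValue.map_neg, Complex.abs_ofReal,
          _root_.abs_of_nonneg (Real.log_nonneg (by norm_num))]
      have hlog3 : 0 < Real.log 3 := Real.log_pos (by norm_num)
      rw [habs, hre] at hA
      nlinarith
    · have him : x.im = -(2*π*(n:ℝ)) := by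
        rw [hxn]
        simp only [Complex.sub_im, Complex.neg_im, Complex.ofReal_im, Complex.mul_im,
          Complex.ofReal_re, Complex.I_im, Complex.I_re, mul_zero, mul_one, zero_sub,
          neg_zero, zero_add, add_zero, zero_mul]
      have h1 : (1:ℝ) ≤ |(n:ℝ)| := by
        rw [← Int.cast_abs]
        exact_mod_cast Int.one_le_abs h0'
      have h2 : 2*π ≤ |x.im| := by
        rw [him, abs_neg, abs_mul, _root_.abs_of_nonneg (by positivity : (0:ℝ) ≤ 2*π)]
        nlinarith [Real.pi_pos]
      linarith [Complex.abs_im_le_norm x, Complex.norm_eq_abs x]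

set_option maxHeartbeats 2000000 in
theorem stmt_5 (L γ : ℝ) (hL : 0 ≤ L) :
    ∃ θ ∈ Set.Ioo (Real.pi / 2) Real.pi, ∃ κ > (0 : ℝ), ∃ τs > (0 : ℝ), ∃ C > (0 : ℝ),
      ∀ τ ∈ Set.Ioc (0 : ℝ) τs, ∀ w : ℂ, ‖w‖ ≤ L →
        ∀ z : ℂ,
          ((κ ≤ ‖z‖ ∧ ‖z‖ ≤ Real.pi / (τ * Real.sin θ) ∧ |z.arg| = θ)
            ∨ (‖z‖ = κ ∧ |z.arg| ≤ θ)) →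
          ‖(z + w) ^ (γ : ℂ)
              - ((((1 - Complex.exp (-(τ : ℂ) * (z + w)))
                  + (1 - Complex.exp (-(τ : ℂ) * (z + w))) ^ 2 / 2) / (τ : ℂ)) ^ (γ : ℂ))‖
            ≤ C * τ ^ 2 * ‖z‖ ^ (γ + 2) := by
  simp only [Complex.norm_eq_abs]
  have hπ1 : (3.141592 : ℝ) < π := Real.pi_gt_d6
  have hπ2 : π < 3.141593 := Real.pi_lt_d6
  set θ : ℝ := 1/10 + π/2 with hθdef
  have hsinθ : Real.sin θ = Real.cos (1/10) := Real.sin_add_pi_div_two (1/10)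
  have hsin_lb : (199/200 : ℝ) ≤ Real.sin θ := by
    rw [hsinθ]
    have h := Real.one_sub_sq_div_two_le_cos (x := 1/10)
    norm_num at h ⊢
    linarith
  have hsinpos : (0:ℝ) < Real.sin θ := by linarith
  set S : ℝ := π / Real.sin θ with hSdef
  have hSpos : 0 < S := div_pos Real.pi_pos hsinpos
  have hS_ub : S ≤ 3.16 := by
    rw [hSdef, div_le_iff₀ hsinpos]; nlinarith
  set M : ℝ := S + 1 with hMdef
  have hM_lt : M < 2*π := by rw [hMdef]; nlinarith
  have hM_pos : 0 < M := by linarith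
  set θ'' : ℝ := θ + 1/4 with hθ''def
  have hθ''1 : π/2 < θ'' := by rw [hθ''def, hθdef]; linarith
  have hθ''2 : θ'' < π := by rw [hθ''def, hθdef]; linarith
  set κ : ℝ := 10*(L+1) with hκdef
  have hκpos : 0 < κ := by rw [hκdef]; linarith
  set G : ℝ := |γ| with hGdef
  have hG0 : 0 ≤ G := abs_nonneg γ
  set ε : ℝ := 1/(100*(G+1)) with hεdef
  have hεpos : 0 < ε := by rw [hεdef]; positivity
  have hεeq : ε * (100*(G+1)) = 1 := by rw [hεdef]; field_simp
  have hε_le : ε ≤ 1/100 := by nlinarith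
  set ε₀ : ℝ := ε/2 with hε₀def
  have hε₀pos : 0 < ε₀ := by rw [hε₀def]; linarith
  set ε₁ : ℝ := ε₀/2 with hε₁def
  have hε₁pos : 0 < ε₁ := by rw [hε₁def]; linarith
  set τs : ℝ := min (ε₀/κ) (1/(L+1)) with hτsdef
  have hτspos : 0 < τs := by
    rw [hτsdef]
    apply lt_min (by positivity) (by positivity)
  clear_value θ S M θ'' κ G ε ε₀ ε₁ τs
  -- compact set K and minimum m
  have hclosed1 : IsClosed {x : ℂ | ε₁ ≤ Complex.abs x} :=
    isClosed_le continuous_const Complex.continuous_abs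
  have hclosed2 : IsClosed {x : ℂ | Complex.abs x * Real.cos θ'' ≤ x.re} :=
    isClosed_le (Complex.continuous_abs.mul continuous_const) Complex.continuous_re
  set K : Set ℂ := Metric.closedBall (0:ℂ) M ∩
      ({x | ε₁ ≤ Complex.abs x} ∩ {x | Complex.abs x * Real.cos θ'' ≤ x.re}) with hKdef
  have hKcomp : IsCompact K :=
    (isCompact_closedBall _ _).inter_right (hclosed1.inter hclosed2)
  have hcosθ''_nonpos : Real.cos θ'' ≤ 0 :=
    Real.cos_nonpos_of_pi_div_two_le_of_le hθ''1.le (by linarith [Real.pi_pos])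
  have hKne : K.Nonempty := by
    refine ⟨(M:ℂ), ?_, ?_, ?_⟩
    · rw [Metric.mem_closedBall, dist_zero_right, Complex.norm_eq_abs, Complex.abs_ofReal,
        _root_.abs_of_pos hM_pos]
    · simp only [Set.mem_setOf_eq, Complex.abs_ofReal, _root_.abs_of_pos hM_pos]
      rw [hε₁def, hε₀def]
      linarith
    · simp only [Set.mem_setOf_eq, Complex.abs_ofReal, _root_.abs_of_pos hM_pos,
        Complex.ofReal_re]
      nlinarith
  set F : ℂ → ℝ := fun x => Complex.abs ((1 - Complex.exp (-x)) + (1 - Complex.exp (-x))^2/2)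
    with hFdef
  have hFcont : Continuous F := by
    apply Complex.continuous_abs.comp
    exact ((continuous_const.sub (Complex.continuous_exp.comp continuous_neg)).add
      (((continuous_const.sub (Complex.continuous_exp.comp continuous_neg)).pow 2).div_const 2))
  obtain ⟨x₀, hx₀K, hx₀min⟩ := hKcomp.exists_isMinOn hKne hFcont.continuousOn
  set m : ℝ := F x₀ with hmdef
  have hmpos : 0 < m := by
    obtain ⟨hx₀ball, hx₀eps, hx₀A⟩ := hx₀K
    have hx₀ne : x₀ ≠ 0 := by
      intro h
      rw [h] at hx₀eps
      simp only [Set.mem_setOf_eq, map_zero] at hx₀eps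
      linarith
    have hx₀M : Complex.abs x₀ ≤ M := by
      rw [Metric.mem_closedBall, dist_zero_right, Complex.norm_eq_abs] at hx₀ball
      exact hx₀ball
    have := aux_f_ne_zero hθ''1 hθ''2 hM_lt hx₀ne hx₀M hx₀A
    rw [hmdef, hFdef]
    exact (Complex.abs.pos_iff).mpr this
  clear_value m
  set c₄ : ℝ := (1 + Real.exp M) + (1 + Real.exp M)^2/2 with hc₄def
  have hc₄pos : 0 < c₄ := by rw [hc₄def]; positivity
  set R₂ : ℝ := max (max (c₄/ε₀) (S/m)) 2 with hR₂def
  have hR₂ge1 : (1:ℝ) ≤ R₂ := le_trans (by norm_num) (le_max_right _ _)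
  set B : ℝ := (2:ℝ)^G + R₂^G with hBdef
  have hBpos : 0 < B := by
    rw [hBdef]
    have := Real.rpow_pos_of_pos (show (0:ℝ) < 2 by norm_num) G
    have := Real.rpow_pos_of_pos (show (0:ℝ) < R₂ by linarith) G
    linarith
  set C₁ : ℝ := 16*(G+1) * (2:ℝ)^|γ+2| with hC₁def
  have hC₁pos : 0 < C₁ := by
    rw [hC₁def]
    have := Real.rpow_pos_of_pos (show (0:ℝ) < 2 by norm_num) |γ+2|
    nlinarith
  set C₂ : ℝ := B/ε₀^2 with hC₂def
  set C : ℝ := max C₁ C₂ with hCdef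
  have hCpos : 0 < C := lt_of_lt_of_le hC₁pos (le_max_left _ _)
  clear_value c₄ R₂ B C₁ C₂ C
  refine ⟨θ, ⟨by rw [hθdef]; linarith, by rw [hθdef]; linarith⟩, κ, hκpos, τs, hτspos,
    C, hCpos, ?_⟩
  rintro τ ⟨hτ0, hτs'⟩ w hw z hz
  -- basic facts about τ, z, w
  have hτ1 : τ ≤ ε₀/κ := le_trans hτs' (by rw [hτsdef]; exact min_le_left _ _)
  have hτκ : τ * κ ≤ ε₀ := (le_div_iff₀ hκpos).mp hτ1
  have hτL : τ * L ≤ 1 := by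
    have h1 : τ ≤ 1/(L+1) := le_trans hτs' (by rw [hτsdef]; exact min_le_right _ _)
    have h2 : τ * L ≤ (1/(L+1)) * L := mul_le_mul_of_nonneg_right h1 hL
    have h3 : (1/(L+1)) * L ≤ 1 := by
      rw [div_mul_eq_mul_div, div_le_one (by linarith only [hL])]
      linarith only []
    linarith only [h2, h3]
  have hzκ : κ ≤ Complex.abs z := by
    rcases hz with ⟨h,_,_⟩ | ⟨h,_⟩
    · exact h
    · exact h.ge
  have hargz : |z.arg| ≤ θ := by
    rcases hz with ⟨_,_,h⟩ | ⟨_,h⟩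
    · exact h.le
    · exact h
  have habsz_pos : 0 < Complex.abs z := lt_of_lt_of_le hκpos hzκ
  have hz0 : z ≠ 0 := by
    intro h; rw [h] at habsz_pos; simp at habsz_pos
  have hwz : Complex.abs w ≤ Complex.abs z / 10 := by
    have h1 : L ≤ κ/10 := by rw [hκdef]; linarith only [hL]
    have h2 : κ/10 ≤ Complex.abs z/10 := by linarith only [hzκ]
    exact le_trans hw (le_trans h1 h2)
  set lam : ℂ := z + w with hlamdef
  have hlam_ub : Complex.abs lam ≤ (11/10) * Complex.abs z := by
    have h1 : Complex.abs lam ≤ Complex.abs z + Complex.abs w := Complex.abs.add_le z w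
    linarith only [h1, hwz]
  have hlam_lb : (9/10) * Complex.abs z ≤ Complex.abs lam := by
    have h2 := Complex.abs.add_le lam (-w)
    rw [show lam + -w = z by rw [hlamdef]; ring] at h2
    rw [AbsoluteValue.map_neg] at h2
    linarith only [h2, hwz]
  have hlampos : 0 < Complex.abs lam := by linarith only [hlam_lb, habsz_pos]
  have hlam0 : lam ≠ 0 := by
    intro h; rw [h] at hlampos; simp at hlampos
  clear_value lam
  -- arg of lam
  set s₀ : ℂ := w / z with hs₀def
  clear_value s₀
  have habs_s₀ : Complex.abs s₀ ≤ 1/10 := by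
    rw [hs₀def, map_div₀, div_le_iff₀ habsz_pos]
    linarith only [hwz]
  have h1s₀ : (1:ℂ) + s₀ ≠ 0 := by
    intro h
    have h2 := aux_abs_one_add_ge (s := s₀)
    rw [h] at h2; simp at h2
    linarith only [h2, habs_s₀]
  have hlam_eq : lam = z * (1 + s₀) := by
    rw [hlamdef, hs₀def]; field_simp
  have harg1 : |Complex.arg (1 + s₀)| ≤ 1/5 := by
    have h2 := aux_arg_one_add (s := s₀) (by linarith only [habs_s₀])
    linarith only [h2, habs_s₀]
  have hargmem : z.arg + (1+s₀).arg ∈ Set.Ioc (-π) π := by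
    obtain ⟨h1,h2⟩ := abs_le.mp hargz
    obtain ⟨h3,h4⟩ := abs_le.mp harg1
    rw [hθdef] at h1 h2
    constructor
    · linarith only [h1, h3, hπ1]
    · linarith only [h2, h4, hπ1]
  have harglam : |lam.arg| ≤ θ + 1/5 := by
    rw [hlam_eq, Complex.arg_mul hz0 h1s₀ hargmem]
    have h5 : |z.arg + (1+s₀).arg| ≤ |z.arg| + |(1+s₀).arg| := abs_add_le _ _
    linarith only [h5, hargz, harg1]
  set x : ℂ := (τ:ℂ) * lam with hxdef
  have hτC : (τ:ℂ) ≠ 0 := by exact_mod_cast hτ0.ne'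
  have hx0 : x ≠ 0 := by rw [hxdef]; exact mul_ne_zero hτC hlam0
  clear_value x
  have habsx : Complex.abs x = τ * Complex.abs lam := by
    rw [hxdef, map_mul, Complex.abs_ofReal, _root_.abs_of_pos hτ0]
  have habsx_pos : 0 < Complex.abs x := by rw [habsx]; positivity
  have hargx : x.arg = lam.arg := by
    rw [hxdef]; exact Complex.arg_real_mul lam hτ0
  rw [show -(τ:ℂ) * lam = -x from by rw [hxdef]; ring]
  set f : ℂ := (1 - Complex.exp (-x)) + (1 - Complex.exp (-x))^2/2 with hfdef
  clear_value f
  have hrpow_z : Complex.abs z ^ (γ+2) = Complex.abs z ^ γ * Complex.abs z^2 :=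
    aux_rpow_add_two habsz_pos γ
  have hzγpos : 0 < Complex.abs z ^ γ := Real.rpow_pos_of_pos habsz_pos γ
  have hzrp_pos : 0 < Complex.abs z ^ (γ+2) := Real.rpow_pos_of_pos habsz_pos _
  rcases le_or_gt (τ * Complex.abs z) ε₀ with hcase | hcase
  · -- SMALL CASE
    have habsx_le : Complex.abs x ≤ ε := by
      rw [habsx]
      have h1 : τ * Complex.abs lam ≤ τ * ((11/10)*Complex.abs z) :=
        mul_le_mul_of_nonneg_left hlam_ub hτ0.le
      have h2 : (11/10)*(τ*Complex.abs z) ≤ (11/10)*ε₀ := by linarith only [hcase]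
      rw [hε₀def] at h2
      linarith only [h1, h2, hεpos]
    have habsx1 : Complex.abs x ≤ 1 := by linarith only [habsx_le, hε_le]
    have hcubic := aux_cubic habsx1
    rw [← hfdef] at hcubic
    set s : ℂ := (f - x)/x with hsdef
    clear_value s
    have hfxs : f = x * (1 + s) := by
      rw [hsdef]; field_simp; ring
    have habss : Complex.abs s ≤ 2 * Complex.abs x^2 := by
      rw [hsdef, map_div₀, div_le_iff₀ habsx_pos]
      calc Complex.abs (f - x) ≤ 2 * Complex.abs x^3 := hcubic
        _ = 2*Complex.abs x^2 * Complex.abs x := by ring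
    have habsss : Complex.abs s ≤ 2*ε^2 := by
      have h1 : Complex.abs x^2 ≤ ε^2 := by
        apply pow_le_pow_left₀ (Complex.abs.nonneg x) habsx_le
      linarith only [habss, h1]
    have habss2 : Complex.abs s ≤ 1/2 := by nlinarith only [habsss, hε_le, hεpos]
    have h1s : (1:ℂ) + s ≠ 0 := by
      intro h
      have h2 := aux_abs_one_add_ge (s := s)
      rw [h] at h2; simp at h2
      linarith only [h2, habss2]
    have hgeq : f / (τ:ℂ) = lam * (1 + s) := by
      rw [hfxs, hxdef]
      field_simp
    have hargs : |Complex.arg (1+s)| ≤ 1 := by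
      have h2 := aux_arg_one_add habss2
      linarith only [h2, habss2]
    have hargmem2 : lam.arg + (1+s).arg ∈ Set.Ioc (-π) π := by
      obtain ⟨h1,h2⟩ := abs_le.mp harglam
      obtain ⟨h3,h4⟩ := abs_le.mp hargs
      rw [hθdef] at h1 h2
      constructor
      · linarith only [h1, h3, hπ1]
      · linarith only [h2, h4, hπ1]
    have hcpow : (f/(τ:ℂ)) ^ (γ:ℂ) = lam ^ (γ:ℂ) * (1+s) ^ (γ:ℂ) := by
      rw [hgeq, Complex.cpow_def_of_ne_zero (mul_ne_zero hlam0 h1s),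
        Complex.log_mul hlam0 h1s hargmem2, add_mul, Complex.exp_add,
        ← Complex.cpow_def_of_ne_zero hlam0, ← Complex.cpow_def_of_ne_zero h1s]
    have hfactor : lam ^ (γ:ℂ) - (f/(τ:ℂ))^(γ:ℂ) = lam^(γ:ℂ) * (1 - (1+s)^(γ:ℂ)) := by
      rw [hcpow]; ring
    rw [hfactor, map_mul, Complex.abs_cpow_real]
    have hlog1s := aux_log_one_add habss2
    have hεG : ε*G ≤ 1/100 := by nlinarith only [hεeq, hεpos, hG0]
    have habslogγ : Complex.abs (Complex.log (1+s) * (γ:ℂ)) =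
        Complex.abs (Complex.log (1+s)) * G := by
      rw [map_mul, Complex.abs_ofReal, hGdef]
    have hsmall : Complex.abs (Complex.log (1+s) * (γ:ℂ)) ≤ 1 := by
      rw [habslogγ]
      have h1 : Complex.abs (Complex.log (1+s)) * G ≤ (4*(2*ε^2))*G := by
        apply mul_le_mul_of_nonneg_right _ hG0
        calc Complex.abs (Complex.log (1+s)) ≤ 4 * Complex.abs s := hlog1s
          _ ≤ 4*(2*ε^2) := by linarith only [habsss]
      have h2 : (4*(2*ε^2))*G = 8*ε*(ε*G) := by ring
      nlinarith only [h1, h2, hεG, hε_le, hεpos, hG0]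
    have hexp1 : Complex.abs ((1+s)^(γ:ℂ) - 1) ≤
        2 * Complex.abs (Complex.log (1+s) * (γ:ℂ)) := by
      rw [Complex.cpow_def_of_ne_zero h1s]
      exact Complex.norm_exp_sub_one_le hsmall
    have hswap : Complex.abs (1 - (1+s)^(γ:ℂ)) = Complex.abs ((1+s)^(γ:ℂ) - 1) := by
      rw [← AbsoluteValue.map_neg Complex.abs]; congr 1; ring
    have hbound2 : Complex.abs (1 - (1+s)^(γ:ℂ)) ≤ 16*G*(τ^2 * Complex.abs lam^2) := by
      rw [hswap]
      have h4 : Complex.abs s ≤ 2*(τ^2*Complex.abs lam^2) := by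
        have h5 : Complex.abs x^2 = τ^2*Complex.abs lam^2 := by rw [habsx]; ring
        rw [← h5]; exact habss
      have h6 : Complex.abs (Complex.log (1+s)) * G ≤ (4*Complex.abs s)*G :=
        mul_le_mul_of_nonneg_right hlog1s hG0
      have h7 : (4*Complex.abs s)*G ≤ (4*(2*(τ^2*Complex.abs lam^2)))*G := by
        apply mul_le_mul_of_nonneg_right _ hG0
        linarith only [h4]
      calc Complex.abs ((1+s)^(γ:ℂ) - 1) ≤ 2*Complex.abs (Complex.log (1+s) * (γ:ℂ)) := hexp1
        _ = 2*(Complex.abs (Complex.log (1+s)) * G) := by rw [habslogγ]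
        _ ≤ 2*((4*(2*(τ^2*Complex.abs lam^2)))*G) := by linarith only [h6, h7]
        _ = 16*G*(τ^2*Complex.abs lam^2) := by ring
    have hlamγpos : 0 < Complex.abs lam ^ γ := Real.rpow_pos_of_pos hlampos γ
    have hratio : Complex.abs lam ^ (γ+2) ≤ 2^|γ+2| * Complex.abs z ^ (γ+2) := by
      apply aux_rpow_ratio hlampos habsz_pos (by norm_num)
      · linarith only [hlam_ub, habsz_pos]
      · linarith only [hlam_lb, habsz_pos, hlampos]
    have h2p : (0:ℝ) < (2:ℝ)^|γ+2| := Real.rpow_pos_of_pos (by norm_num) _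
    have hcoef : 16*G*(2:ℝ)^|γ+2| ≤ C₁ := by
      rw [hC₁def]
      nlinarith only [h2p, hG0]
    have hC₁C : C₁ ≤ C := by rw [hCdef]; exact le_max_left _ _
    calc Complex.abs lam ^ γ * Complex.abs (1 - (1+s)^(γ:ℂ))
        ≤ Complex.abs lam ^ γ * (16*G*(τ^2 * Complex.abs lam^2)) :=
          mul_le_mul_of_nonneg_left hbound2 hlamγpos.le
      _ = 16*G*τ^2 * (Complex.abs lam ^ γ * Complex.abs lam^2) := by ring
      _ = 16*G*τ^2 * Complex.abs lam ^ (γ+2) := by rw [← aux_rpow_add_two hlampos γ]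
      _ ≤ 16*G*τ^2 * (2^|γ+2| * Complex.abs z ^ (γ+2)) := by
          apply mul_le_mul_of_nonneg_left hratio (by positivity)
      _ = (16*G*(2:ℝ)^|γ+2|) * (τ^2 * Complex.abs z ^ (γ+2)) := by ring
      _ ≤ C₁ * (τ^2 * Complex.abs z ^ (γ+2)) :=
          mul_le_mul_of_nonneg_right hcoef (by positivity)
      _ ≤ C * (τ^2 * Complex.abs z ^ (γ+2)) :=
          mul_le_mul_of_nonneg_right hC₁C (by positivity)
      _ = C * τ^2 * Complex.abs z ^ (γ+2) := by ring
  · -- LARGE CASE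
    have hzS : τ * Complex.abs z ≤ S := by
      rcases hz with ⟨_, hub, _⟩ | ⟨heq, _⟩
      · have h1 : τ * Complex.abs z ≤ τ * (π / (τ * Real.sin θ)) :=
          mul_le_mul_of_nonneg_left hub hτ0.le
        have h2 : τ * (π / (τ * Real.sin θ)) = S := by
          rw [hSdef]
          field_simp
        rw [h2] at h1; exact h1
      · exfalso
        rw [heq] at hcase
        linarith only [hcase, hτκ]
    have habsxM : Complex.abs x ≤ M := by
      rw [habsx, hMdef]
      have h1 : Complex.abs lam ≤ Complex.abs z + L := by
        have h2 : Complex.abs lam ≤ Complex.abs z + Complex.abs w := by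
          rw [hlamdef]; exact Complex.abs.add_le z w
        linarith only [h2, hw]
      have h3 : τ * Complex.abs lam ≤ τ*(Complex.abs z + L) :=
        mul_le_mul_of_nonneg_left h1 hτ0.le
      have h4 : τ*(Complex.abs z + L) = τ*Complex.abs z + τ*L := by ring
      linarith only [h3, h4, hzS, hτL]
    have habsx_lb : ε₁ ≤ Complex.abs x := by
      rw [habsx, hε₁def]
      have h2 : (9/10)*(τ*Complex.abs z) ≤ τ*Complex.abs lam := by
        calc (9/10)*(τ*Complex.abs z) = τ*((9/10)*Complex.abs z) := by ring
          _ ≤ τ*Complex.abs lam := mul_le_mul_of_nonneg_left hlam_lb hτ0.le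
      linarith only [h2, hcase, hε₀pos]
    have hxK : x ∈ K := by
      refine ⟨?_, ?_, ?_⟩
      · rw [Metric.mem_closedBall, dist_zero_right, Complex.norm_eq_abs]; exact habsxM
      · exact habsx_lb
      · simp only [Set.mem_setOf_eq]
        have hc1 : Real.cos θ'' ≤ Real.cos (x.arg) := by
          rw [← Real.cos_abs (x.arg)]
          apply Real.cos_le_cos_of_nonneg_of_le_pi (abs_nonneg _) hθ''2.le
          rw [hargx]
          have h1 : θ + 1/5 ≤ θ'' := by rw [hθ''def]; norm_num
          exact le_trans harglam h1
        calc Complex.abs x * Real.cos θ'' ≤ Complex.abs x * Real.cos x.arg :=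
            mul_le_mul_of_nonneg_left hc1 (Complex.abs.nonneg x)
          _ = x.re := Complex.abs_mul_cos_arg x
    have hmf : m ≤ Complex.abs f := by
      have h1 : F x₀ ≤ F x := hx₀min hxK
      rw [hfdef, hmdef, hFdef]
      exact h1
    have habsfpos : 0 < Complex.abs f := lt_of_lt_of_le hmpos hmf
    have hf0 : f ≠ 0 := by
      intro h; rw [h] at habsfpos; simp at habsfpos
    have hfub : Complex.abs f ≤ c₄ := by
      have hu : Complex.abs (1 - Complex.exp (-x)) ≤ 1 + Real.exp M := by
        have h1 : Complex.abs (1 - Complex.exp (-x)) ≤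
            Complex.abs 1 + Complex.abs (Complex.exp (-x)) := Complex.abs.sub_le_add _ _
        rw [map_one, Complex.abs_exp] at h1
        have h2 : (-x).re ≤ M := by
          have h3 := Complex.abs_re_le_norm (-x)
          rw [norm_neg, Complex.norm_eq_abs] at h3
          have h4 := (abs_le.mp h3).2
          linarith only [h4, habsxM]
        have h5 : Real.exp ((-x).re) ≤ Real.exp M := Real.exp_le_exp.mpr h2
        linarith only [h1, h5]
      rw [hfdef, hc₄def]
      have h6 : Complex.abs ((1 - Complex.exp (-x)) + (1 - Complex.exp (-x))^2/2) ≤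
          Complex.abs (1 - Complex.exp (-x)) + Complex.abs ((1 - Complex.exp (-x))^2/2) :=
        Complex.abs.add_le _ _
      have h7 : Complex.abs ((1 - Complex.exp (-x))^2/2) =
          Complex.abs (1 - Complex.exp (-x))^2/2 := by
        rw [map_div₀, map_pow]; simp [Complex.abs_two]
      have h8 : Complex.abs (1 - Complex.exp (-x))^2 ≤ (1 + Real.exp M)^2 :=
        pow_le_pow_left₀ (Complex.abs.nonneg _) hu 2
      rw [h7] at h6
      linarith only [h6, h8, hu]
    have habsg : Complex.abs (f / (τ:ℂ)) = Complex.abs f / τ := by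
      rw [map_div₀, Complex.abs_ofReal, _root_.abs_of_pos hτ0]
    have hgpos : 0 < Complex.abs f / τ := div_pos habsfpos hτ0
    have h₁ : Complex.abs lam ^ γ ≤ 2^G * Complex.abs z ^ γ := by
      rw [hGdef]
      apply aux_rpow_ratio hlampos habsz_pos (by norm_num)
      · linarith only [hlam_ub, habsz_pos]
      · linarith only [hlam_lb, habsz_pos, hlampos]
    have hr1 : c₄/ε₀ ≤ R₂ := by rw [hR₂def]; exact le_trans (le_max_left _ _) (le_max_left _ _)
    have hr2 : S/m ≤ R₂ := by rw [hR₂def]; exact le_trans (le_max_right _ _) (le_max_left _ _)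
    have h₂a : Complex.abs f / τ ≤ R₂ * Complex.abs z := by
      rw [div_le_iff₀ hτ0]
      have step1 : Complex.abs f ≤ (c₄/ε₀) * (τ * Complex.abs z) := by
        calc Complex.abs f ≤ c₄ := hfub
          _ = (c₄/ε₀) * ε₀ := by field_simp
          _ ≤ (c₄/ε₀) * (τ*Complex.abs z) :=
              mul_le_mul_of_nonneg_left hcase.le (by positivity)
      calc Complex.abs f ≤ (c₄/ε₀) * (τ*Complex.abs z) := step1
        _ ≤ R₂ * (τ * Complex.abs z) :=
            mul_le_mul_of_nonneg_right hr1 (by positivity)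
        _ = R₂ * Complex.abs z * τ := by ring
    have h₂b : Complex.abs z ≤ R₂ * (Complex.abs f/τ) := by
      have e2 : Complex.abs z ≤ S/τ := by
        rw [le_div_iff₀ hτ0]
        calc Complex.abs z * τ = τ * Complex.abs z := by ring
          _ ≤ S := hzS
      have e3 : S/τ ≤ (S/m) * (Complex.abs f/τ) := by
        rw [div_mul_div_comm, div_le_div_iff₀ hτ0 (by positivity)]
        calc S*(m*τ) = (S*τ)*m := by ring
          _ ≤ (S*τ)*Complex.abs f :=
              mul_le_mul_of_nonneg_left hmf (by positivity)
          _ = S*Complex.abs f*τ := by ring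
      have e4 : (S/m)*(Complex.abs f/τ) ≤ R₂*(Complex.abs f/τ) :=
        mul_le_mul_of_nonneg_right hr2 (by positivity)
      linarith only [e2, e3, e4]
    have h₂ : (Complex.abs f/τ) ^ γ ≤ R₂^G * Complex.abs z ^ γ := by
      rw [hGdef]
      exact aux_rpow_ratio hgpos habsz_pos hR₂ge1 h₂a h₂b
    have htri : Complex.abs (lam ^ (γ:ℂ) - (f/(τ:ℂ))^(γ:ℂ)) ≤
        Complex.abs lam ^ γ + (Complex.abs f/τ)^γ := by
      have h3 := Complex.abs.sub_le_add (lam ^ (γ:ℂ)) ((f/(τ:ℂ))^(γ:ℂ))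
      rw [Complex.abs_cpow_real, Complex.abs_cpow_real, habsg] at h3
      exact h3
    have hBbd : Complex.abs lam ^ γ + (Complex.abs f/τ)^γ ≤ B * Complex.abs z ^ γ := by
      rw [hBdef, add_mul]
      linarith only [h₁, h₂]
    have hCC₂ : C₂ ≤ C := by rw [hCdef]; exact le_max_right _ _
    have hsq : ε₀^2 ≤ (τ*Complex.abs z)^2 := by
      apply pow_le_pow_left₀ hε₀pos.le hcase.le
    have hrhs : B * Complex.abs z ^ γ ≤ C * τ^2 * Complex.abs z ^ (γ+2) := by
      have e4 : B * Complex.abs z ^ γ = (B/ε₀^2)*(ε₀^2 * Complex.abs z^γ) := by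
        rw [div_mul_eq_mul_div, eq_div_iff (by positivity : (ε₀:ℝ)^2 ≠ 0)]; ring
      have e5 : (B/ε₀^2)*(ε₀^2*Complex.abs z^γ) ≤
          (B/ε₀^2)*((τ*Complex.abs z)^2 * Complex.abs z^γ) := by
        apply mul_le_mul_of_nonneg_left _ (by positivity)
        exact mul_le_mul_of_nonneg_right hsq hzγpos.le
      have e6 : (B/ε₀^2)*((τ*Complex.abs z)^2 * Complex.abs z^γ) =
          C₂ * τ^2 * (Complex.abs z^γ * Complex.abs z^2) := by
        rw [hC₂def]; ring
      have e7 : C₂ * τ^2 * (Complex.abs z^γ * Complex.abs z^2) ≤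
          C * τ^2 * (Complex.abs z^γ * Complex.abs z^2) := by
        apply mul_le_mul_of_nonneg_right _ (by positivity)
        exact mul_le_mul_of_nonneg_right hCC₂ (sq_nonneg τ)
      rw [e4, hrpow_z]
      calc (B/ε₀^2)*(ε₀^2 * Complex.abs z^γ)
          ≤ (B/ε₀^2)*((τ*Complex.abs z)^2 * Complex.abs z^γ) := e5
        _ = C₂ * τ^2 * (Complex.abs z^γ * Complex.abs z^2) := e6
        _ ≤ C * τ^2 * (Complex.abs z^γ * Complex.abs z^2) := e7
    exact le_trans htri (le_trans hBbd hrhs)
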